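/- arXiv:2402.05887 — 4 statements merged into one kernel-verified Lean document; each statement's English description precedes it below -/
import Mathlib

section
/- Exact optimal sandwich (ideal pre- and post-processors). Let K be a finite nonempty type, let α* : ℝⁿ → K and β* : K → ℝⁿ be the encoder and decoder of an arbitrary codec, let α : ℝᵐ → K be a regular encoder (every fiber {y ∈ ℝᵐ : α(y) = k} has nonempty interior), let β : K → ℝᵐ be an injective decoder, and let π : K ≃ K be a permutation. Then there exist functions f : ℝⁿ → ℝᵐ (pre-processor) and g : ℝᵐ → ℝⁿ (post-processor) such that for every x ∈ ℝⁿ: α(f(x)) = π(α*(x)) and g(β(α(f(x)))) = β*(α*(x)). Consequently, for every ℝⁿ-valued random vector X with α* ∘ X measurable and every measurable distortion measure d : ℝⁿ × ℝⁿ → [0,∞), the sandwiched codec has exactly the same expected distortion, E[d(X, g(β(α(f(X)))))] = E[d(X, β*(α*(X)))], and for every codelength function L : K → ℕ its expected rate satisfies E[L(α(f(X)))] = ∑_{k∈K} P(α*(X)=k) · L(π(k)). -/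
open MeasureTheory ENNReal

/-- **Exact optimal sandwich (ideal pre- and post-processors).**
Given an arbitrary codec `(αstar, βstar)` for `ℝⁿ` with finite nonempty index set `K`,
a regular encoder `α : ℝᵐ → K` (every fiber has nonempty interior), an injective decoder
`β : K → ℝᵐ`, and a permutation `π` of `K`, there exist a pre-processor `f` and a
post-processor `g` such that `α (f x) = π (αstar x)` and `g (β (α (f x))) = βstar (αstar x)`
for every `x`.  Consequently, for every random vector `X` with `αstar ∘ X` measurable and
every measurable distortion measure `d`, the sandwiched codec has exactly the same expected
distortion, and for every codelength function `L` its expected rate equals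
`∑ k, P(αstar (X) = k) * L (π k)`. -/
theorem exact_optimal_sandwich {n m : ℕ} {K : Type*} [Fintype K] [Nonempty K]
    (αstar : (Fin n → ℝ) → K) (βstar : K → (Fin n → ℝ))
    (α : (Fin m → ℝ) → K) (hreg : ∀ k : K, (interior {y : Fin m → ℝ | α y = k}).Nonempty)
    (β : K → (Fin m → ℝ)) (hβ : Function.Injective β)
    (π : Equiv.Perm K) :
    ∃ f : (Fin n → ℝ) → (Fin m → ℝ), ∃ g : (Fin m → ℝ) → (Fin n → ℝ),
      (∀ x, α (f x) = π (αstar x)) ∧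
      (∀ x, g (β (α (f x))) = βstar (αstar x)) ∧
      (∀ (Ω : Type) (_ : MeasurableSpace Ω) (P : Measure Ω), IsProbabilityMeasure P →
        ∀ X : Ω → (Fin n → ℝ), (∀ k : K, MeasurableSet {ω | αstar (X ω) = k}) →
          ((∀ d : (Fin n → ℝ) × (Fin n → ℝ) → ℝ≥0∞, Measurable d →
              ∫⁻ ω, d (X ω, g (β (α (f (X ω))))) ∂P
                = ∫⁻ ω, d (X ω, βstar (αstar (X ω))) ∂P) ∧
           (∀ L : K → ℕ,
              ∫⁻ ω, (L (α (f (X ω))) : ℝ≥0∞) ∂P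
                = ∑ k : K, P {ω | αstar (X ω) = k} * (L (π k) : ℝ≥0∞)))) := by
  classical
  choose y hy using fun k : K => (hreg k)
  have hyα : ∀ k, α (y k) = k := by intro k; have h := interior_subset (hy k); exact h
  have hg : ∀ k, Function.invFun β (β k) = k := fun k => Function.leftInverse_invFun hβ k
  refine ⟨fun x => y (π (αstar x)), fun z => βstar (π.symm (Function.invFun β z)), ?_, ?_, ?_⟩
  · intro x; exact hyα _
  · intro x
    simp only [hyα, hg, Equiv.symm_apply_apply]
  · intro Ω _ P hP X hX
    constructor
    · intro d hd
      congr 1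
      funext ω
      simp only [hyα, hg, Equiv.symm_apply_apply]
    · intro L
      have h1 : ∀ ω, ((L (α (y (π (αstar (X ω))))) : ℝ≥0∞))
          = ∑ k : K, Set.indicator {ω | αstar (X ω) = k} (fun _ => (L (π k) : ℝ≥0∞)) ω := by
        intro ω
        rw [Finset.sum_eq_single (αstar (X ω))]
        · simp [hyα, Set.indicator_of_mem, Set.mem_setOf_eq]
        · intro k _ hk
          exact Set.indicator_of_notMem (fun h => hk (h.symm)) _
        · simp
      simp only [h1]
      rw [lintegral_finset_sum _ (fun k _ => (measurable_const.indicator (hX k)))]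
      congr 1
      funext k
      rw [lintegral_indicator (hX k)]
      simp [mul_comm]
end

section
/- Existence of a continuous pre-processor achieving the prescribed encoding with high probability. Let μ be a Borel probability measure on ℝⁿ, let K be a finite nonempty type, let α* : ℝⁿ → K be Borel measurable, let α : ℝᵐ → K be a regular encoder (every fiber {y ∈ ℝᵐ : α(y) = k} has nonempty interior), and let π : K ≃ K be a permutation. Then for every δ > 0 there exists a continuous function f : ℝⁿ → ℝᵐ such that μ({x ∈ ℝⁿ : α(f(x)) = π(α*(x))}) ≥ 1 − δ. -/
open MeasureTheory ENNReal

/-- **Existence of a continuous pre-processor achieving the prescribed encoding with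
high probability.**  Let `μ` be a Borel probability measure on `ℝⁿ`, `αstar : ℝⁿ → K` a
Borel-measurable encoder into a finite nonempty index set, `α : ℝᵐ → K` a regular encoder
(every fiber has nonempty interior), and `π : K ≃ K` a permutation.  Then for every
`δ > 0` there is a continuous `f : ℝⁿ → ℝᵐ` with
`μ {x | α (f x) = π (αstar x)} ≥ 1 - δ`. -/
theorem continuous_preprocessor_exists {n m : ℕ} {K : Type*} [Fintype K] [Nonempty K]
    (μ : Measure (Fin n → ℝ)) [IsProbabilityMeasure μ]
    (αstar : (Fin n → ℝ) → K)
    (hαstar : ∀ k : K, MeasurableSet {x : Fin n → ℝ | αstar x = k})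
    (α : (Fin m → ℝ) → K)
    (hreg : ∀ k : K, (interior {y : Fin m → ℝ | α y = k}).Nonempty)
    (π : Equiv.Perm K) :
    ∀ δ : ℝ, 0 < δ →
      ∃ f : (Fin n → ℝ) → (Fin m → ℝ), Continuous f ∧
        1 - ENNReal.ofReal δ ≤ μ {x : Fin n → ℝ | α (f x) = π (αstar x)} := by
  intro δ hδ
  -- a point in each fiber (interior)
  choose y hy using hreg
  have hyk : ∀ k, α (y k) = k := fun k => by
    have h := interior_subset (hy k); simpa using h
  -- the measurable partition
  set A : K → Set (Fin n → ℝ) := fun k => {x | αstar x = π.symm k} with hA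
  have hAm : ∀ k, MeasurableSet (A k) := fun k => hαstar (π.symm k)
  have hAdisj : Pairwise (Function.onFun Disjoint A) := by
    intro j k hjk
    refine Set.disjoint_left.mpr fun x hxj hxk => hjk ?_
    have : π.symm j = π.symm k := hxj.symm.trans hxk
    exact π.symm.injective this
  set N : ℕ := Fintype.card K with hNdef
  have hN : 0 < N := Fintype.card_pos
  set ε : ℝ≥0∞ := ENNReal.ofReal δ / N with hεdef
  have hε : ε ≠ 0 := by
    intro h
    rw [hεdef, ENNReal.div_eq_zero_iff] at h
    rcases h with h | h
    · rw [ENNReal.ofReal_eq_zero] at h; exact absurd hδ (not_lt.mpr h)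
    · exact ENNReal.natCast_ne_top N h
  -- closed inner approximations
  have hclosed : ∀ k, ∃ F ⊆ A k, IsClosed F ∧ μ (A k) < μ F + ε := fun k =>
    (hAm k).exists_isClosed_lt_add (measure_ne_top μ _) hε
  choose F hFA hFc hFμ using hclosed
  have hFdisj : Pairwise (Function.onFun Disjoint F) := fun j k hjk =>
    (hAdisj hjk).mono (hFA j) (hFA k)
  -- Urysohn bump functions: u k = 1 on F k, 0 on the other F j's
  have hurysohn : ∀ k : K, ∃ u : C((Fin n → ℝ), ℝ),
      Set.EqOn u 0 (⋃ j ∈ ({k}ᶜ : Set K), F j) ∧ Set.EqOn u 1 (F k) ∧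
      ∀ x, u x ∈ Set.Icc (0:ℝ) 1 := by
    intro k
    have h1 : IsClosed (⋃ j ∈ ({k}ᶜ : Set K), F j) := by
      apply Set.Finite.isClosed_biUnion (Set.toFinite _)
      intro j _; exact hFc j
    have hd : Disjoint (⋃ j ∈ ({k}ᶜ : Set K), F j) (F k) := by
      refine Set.disjoint_left.mpr fun x hx hxk => ?_
      obtain ⟨j, hj, hxj⟩ := Set.mem_iUnion₂.mp hx
      exact Set.disjoint_left.mp (hFdisj hj) hxj hxk
    exact exists_continuous_zero_one_of_isClosed h1 (hFc k) hd
  choose u hu0 hu1 _hu01 using hurysohn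
  -- the continuous pre-processor
  refine ⟨fun x => ∑ k, u k x • y k, ?_, ?_⟩
  · exact continuous_finset_sum _ fun k _ => ((u k).continuous).smul continuous_const
  · -- on each F k the map equals y k, hence encodes correctly
    have hf : ∀ k, ∀ x ∈ F k, (∑ j, u j x • y j) = y k := by
      intro k x hx
      rw [Finset.sum_eq_single k]
      · rw [hu1 k hx]; simp
      · intro j _ hjk
        have : u j x = 0 := hu0 j (Set.mem_biUnion (by simpa using hjk.symm) hx)
        rw [this, zero_smul]
      · intro h; exact absurd (Finset.mem_univ k) h
    have hsubset : (⋃ k, F k) ⊆ {x : Fin n → ℝ | α (∑ j, u j x • y j) = π (αstar x)} := by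
      intro x hx
      obtain ⟨k, hxk⟩ := Set.mem_iUnion.mp hx
      have hxA : αstar x = π.symm k := hFA k hxk
      simp only [Set.mem_setOf_eq, hf k x hxk, hyk, hxA, Equiv.apply_symm_apply]
    refine le_trans ?_ (measure_mono hsubset)
    -- 1 ≤ μ(⋃ F) + δ
    have hcover : (⋃ k, A k) = Set.univ := by
      ext x; simp only [Set.mem_iUnion, Set.mem_univ, iff_true]
      exact ⟨π (αstar x), by simp [hA]⟩
    have hsumA : ∑ k, μ (A k) = 1 := by
      rw [← tsum_fintype (L := SummationFilter.unconditional _), ← measure_iUnion hAdisj hAm, hcover, measure_univ]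
    have hsumF : μ (⋃ k, F k) = ∑ k, μ (F k) :=
      (measure_iUnion hFdisj fun k => (hFc k).measurableSet).trans (tsum_fintype _)
    have key : (1 : ℝ≥0∞) ≤ μ (⋃ k, F k) + ENNReal.ofReal δ := by
      calc (1 : ℝ≥0∞) = ∑ k, μ (A k) := hsumA.symm
        _ ≤ ∑ k, (μ (F k) + ε) := Finset.sum_le_sum fun k _ => (hFμ k).le
        _ = (∑ k, μ (F k)) + N • ε := by rw [Finset.sum_add_distrib, Finset.sum_const]; simp [hNdef]
        _ = μ (⋃ k, F k) + ENNReal.ofReal δ := by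
            rw [hsumF, nsmul_eq_mul, hεdef,
              ENNReal.mul_div_cancel (by exact_mod_cast hN.ne') (ENNReal.natCast_ne_top N)]
    exact tsub_le_iff_right.mpr key
end

section
/- Optimal sandwich with continuous processors (continuous form of the Optimal Sandwich proposition). Let X be a random vector taking values almost surely in a compact set B ⊆ ℝⁿ (a bounded source), let d : ℝⁿ × ℝⁿ → [0,∞) be continuous, let K be a finite nonempty type, let α* : ℝⁿ → K be Borel measurable and β* : K → ℝⁿ be a codec with expected distortion D₀ := E[d(X, β*(α*(X)))]. Let α : ℝᵐ → K be a Borel measurable regular encoder (every fiber has nonempty interior), let β : K → ℝᵐ be injective, let L : K → ℕ be a codelength function, and let π : K ≃ K be a permutation. Set p(k) := P(α*(X) = k) and q(k) := 2^{−L(π(k))}. Then for every ε > 0 there exist continuous functions f : ℝⁿ → ℝᵐ and g : ℝᵐ → ℝⁿ such that the sandwiched codec satisfies E[d(X, g(β(α(f(X)))))] ≤ D₀ + ε and E[L(α(f(X)))] ≤ H(p) + D(p‖q) + ε. -/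
open MeasureTheory ENNReal

lemma sum_indicator_eq_comp {Ω K : Type*} [Fintype K] (κ : Ω → K) (c : K → Ω → ℝ) (ω : Ω) :
    ∑ k, Set.indicator {ω' | κ ω' = k} (c k) ω = c (κ ω) ω := by
  classical
  rw [Finset.sum_eq_single (κ ω)]
  · exact Set.indicator_of_mem (by simp) _
  · intro b _ hb
    refine Set.indicator_of_notMem ?_ _
    simp only [Set.mem_setOf_eq]
    exact fun h => hb h.symm
  · simp

lemma exists_continuous_extension {a b : ℕ} {K : Type*} [Fintype K]
    (C : K → Set (Fin a → ℝ)) (hC : ∀ k, IsCompact (C k))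
    (hdisj : ∀ j k, j ≠ k → Disjoint (C j) (C k))
    (v : K → (Fin b → ℝ)) :
    ∃ f : (Fin a → ℝ) → (Fin b → ℝ), Continuous f ∧ ∀ k, ∀ x ∈ C k, f x = v k := by
  classical
  set D : Set (Fin a → ℝ) := ⋃ k, C k with hD
  have hDclosed : IsClosed D := isClosed_iUnion_of_finite (fun k => (hC k).isClosed)
  set h : (Fin a → ℝ) → (Fin b → ℝ) :=
    fun x => if hx : ∃ k, x ∈ C k then v hx.choose else 0 with hh
  have hkey : ∀ k, ∀ x ∈ C k, h x = v k := by
    intro k x hx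
    have hex : ∃ k, x ∈ C k := ⟨k, hx⟩
    have : hex.choose = k := by
      by_contra hne
      exact (hdisj _ _ hne).ne_of_mem hex.choose_spec hx rfl
    simp only [hh, dif_pos hex, this]
  have hcont : Continuous (D.restrict h) := by
    rw [continuous_iff_continuousAt]
    rintro ⟨x, hxD⟩
    obtain ⟨k₀, hk₀⟩ : ∃ k, x ∈ C k := by simpa [hD, Set.mem_iUnion] using hxD
    set U : Set (Fin a → ℝ) := ⋃ j, ⋃ (_ : j ≠ k₀), C j with hU
    have hUclosed : IsClosed U :=
      isClosed_iUnion_of_finite fun j => isClosed_iUnion_of_finite fun _ => (hC j).isClosed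
    have hxU : x ∉ U := by
      simp only [hU, Set.mem_iUnion]
      rintro ⟨j, hj, hxj⟩
      exact (hdisj j k₀ hj).ne_of_mem hxj hk₀ rfl
    have hev : ∀ᶠ z : D in nhds ⟨x, hxD⟩, D.restrict h z = v k₀ := by
      have hVopen : IsOpen ((Subtype.val : D → _) ⁻¹' Uᶜ) :=
        hUclosed.isOpen_compl.preimage continuous_subtype_val
      have hmem : (⟨x, hxD⟩ : D) ∈ (Subtype.val : D → _) ⁻¹' Uᶜ := hxU
      filter_upwards [hVopen.mem_nhds hmem] with z hz
      obtain ⟨j, hj⟩ : ∃ j, (z : Fin a → ℝ) ∈ C j := Set.mem_iUnion.1 z.2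
      have : j = k₀ := by
        by_contra hne
        exact hz (Set.mem_iUnion.2 ⟨j, Set.mem_iUnion.2 ⟨hne, hj⟩⟩)
      subst this
      exact hkey j _ hj
    exact Filter.EventuallyEq.continuousAt hev
  obtain ⟨F, hF⟩ := ContinuousMap.exists_restrict_eq (Y := Fin b → ℝ) hDclosed ⟨D.restrict h, hcont⟩
  refine ⟨F, F.continuous, fun k x hx => ?_⟩
  have hxD : x ∈ D := Set.mem_iUnion.2 ⟨k, hx⟩
  have := congrFun (congrArg DFunLike.coe hF) ⟨x, hxD⟩
  simp only [ContinuousMap.restrict_apply, ContinuousMap.coe_mk] at this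
  rw [this]
  exact hkey k x hx

/-- **Optimal sandwich with continuous processors** (continuous form of the Optimal
Sandwich proposition).  Let `X` be a random vector taking values a.s. in a compact set
`B ⊆ ℝⁿ`, let `d` be a continuous nonnegative distortion measure, let `(αstar, βstar)`
be a codec for `ℝⁿ` with Borel-measurable encoder and expected distortion `D₀`, and let
`(α, β)` be a regular standard codec for `ℝᵐ` with measurable encoder fibers, each fiber
having nonempty interior, and injective decoder.  With `p k = P(αstar (X) = k)` and
`q k = 2^{-L(π k)}`, for every `ε > 0` there are continuous pre- and post-processors
`f, g` such that the sandwiched codec has expected distortion at most `D₀ + ε` and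
expected rate at most `H(p) + D(p‖q) + ε`. -/
theorem optimal_sandwich_continuous {n m : ℕ} {K : Type*} [Fintype K] [Nonempty K]
    {Ω : Type*} [MeasurableSpace Ω] (P : Measure Ω) [IsProbabilityMeasure P]
    (X : Ω → (Fin n → ℝ)) (hX : Measurable X)
    (B : Set (Fin n → ℝ)) (hB : IsCompact B) (hXB : ∀ᵐ ω ∂P, X ω ∈ B)
    (d : (Fin n → ℝ) × (Fin n → ℝ) → ℝ) (hd : Continuous d) (hd0 : ∀ z, 0 ≤ d z)
    (αstar : (Fin n → ℝ) → K)
    (hαstar : ∀ k : K, MeasurableSet {x : Fin n → ℝ | αstar x = k})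
    (βstar : K → (Fin n → ℝ))
    (α : (Fin m → ℝ) → K)
    (hα : ∀ k : K, MeasurableSet {y : Fin m → ℝ | α y = k})
    (hreg : ∀ k : K, (interior {y : Fin m → ℝ | α y = k}).Nonempty)
    (β : K → (Fin m → ℝ)) (hβ : Function.Injective β)
    (L : K → ℕ) (π : Equiv.Perm K)
    (p : K → ℝ) (hp : ∀ k, p k = (P {ω | αstar (X ω) = k}).toReal)
    (q : K → ℝ) (hq : ∀ k, q k = (2 : ℝ) ^ (-(L (π k) : ℝ))) :
    ∀ ε : ℝ, 0 < ε →
      ∃ f : (Fin n → ℝ) → (Fin m → ℝ), ∃ g : (Fin m → ℝ) → (Fin n → ℝ),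
        Continuous f ∧ Continuous g ∧
        (∫ ω, d (X ω, g (β (α (f (X ω))))) ∂P)
          ≤ (∫ ω, d (X ω, βstar (αstar (X ω))) ∂P) + ε ∧
        (∫ ω, (L (α (f (X ω))) : ℝ) ∂P)
          ≤ (-∑ k : K, p k * Real.logb 2 (p k))
            + (∑ k : K, p k * Real.logb 2 (p k / q k)) + ε := by
  classical
  intro ε hε
  -- pushforward measure
  set μ : Measure (Fin n → ℝ) := P.map X with hμdef
  haveI : IsProbabilityMeasure μ := Measure.isProbabilityMeasure_map hX.aemeasurable
  -- interior points of α-fibers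
  choose y hy using hreg
  have hyα : ∀ k, α (y k) = k := by
    intro k
    have h := interior_subset (hy k)
    simpa using h
  -- a uniform bound on the distortion against βstar points over B
  obtain ⟨M₀, hM₀⟩ : ∃ M₀, ∀ x ∈ B, ‖∑ k : K, d (x, βstar k)‖ ≤ M₀ :=
    hB.exists_bound_of_continuousOn
      (Continuous.continuousOn (by continuity))
  have hdB : ∀ x ∈ B, ∀ k : K, d (x, βstar k) ≤ M₀ := by
    intro x hx k
    have h1 : d (x, βstar k) ≤ ∑ j : K, d (x, βstar j) :=
      Finset.single_le_sum (f := fun j => d (x, βstar j)) (fun j _ => hd0 _) (Finset.mem_univ k)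
    calc d (x, βstar k) ≤ ∑ j : K, d (x, βstar j) := h1
      _ ≤ ‖∑ j : K, d (x, βstar j)‖ := le_abs_self _
      _ ≤ M₀ := hM₀ x hx
  set M : ℝ := max M₀ 0 with hMdef
  have hM0 : 0 ≤ M := le_max_right _ _
  have hdBM : ∀ x ∈ B, ∀ k : K, d (x, βstar k) ≤ M :=
    fun x hx k => (hdB x hx k).trans (le_max_left _ _)
  -- bound on codelengths
  set Lmax : ℝ := ∑ k : K, (L k : ℝ) with hLmaxdef
  have hLmax0 : 0 ≤ Lmax := Finset.sum_nonneg fun k _ => Nat.cast_nonneg _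
  have hLle : ∀ k : K, (L k : ℝ) ≤ Lmax := by
    intro k
    rw [hLmaxdef]
    exact Finset.single_le_sum (f := fun j => ((L j : ℝ)))
      (fun j _ => Nat.cast_nonneg _) (Finset.mem_univ k)
  -- choose η
  set η : ℝ := ε / (M + Lmax + 1) with hηdef
  have hdenom : (0:ℝ) < M + Lmax + 1 := by linarith
  have hη : 0 < η := div_pos hε hdenom
  -- inner regularity: compact subsets of the αstar-fibers
  set c : ℝ≥0∞ := ENNReal.ofReal η / (Fintype.card K : ℝ≥0∞) with hcdef
  have hc0 : c ≠ 0 := by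
    refine ENNReal.div_ne_zero.2 ⟨?_, ?_⟩
    · simpa using hη
    · exact natCast_ne_top _
  have hCex : ∀ k : K, ∃ Ck, Ck ⊆ {x | αstar x = k} ∧ IsCompact Ck ∧
      μ ({x | αstar x = k} \ Ck) < c :=
    fun k => (hαstar k).exists_isCompact_diff_lt (measure_ne_top μ _) hc0
  choose C hCsub hCcomp hCμ using hCex
  have hCα : ∀ k, ∀ x ∈ C k, αstar x = k := fun k x hx => hCsub k hx
  have hCdisj : ∀ j k : K, j ≠ k → Disjoint (C j) (C k) := by
    intro j k hjk
    rw [Set.disjoint_left]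
    intro x hxj hxk
    exact hjk ((hCα j x hxj).symm.trans (hCα k x hxk))
  -- construct f and g
  obtain ⟨f, hfc, hfC⟩ := exists_continuous_extension C hCcomp hCdisj (fun k => y (π k))
  obtain ⟨g, hgc, hgC⟩ := exists_continuous_extension (fun k => ({β k} : Set (Fin m → ℝ)))
    (fun k => isCompact_singleton)
    (fun j k hjk => Set.disjoint_singleton.2 fun h => hjk (hβ h))
    (fun k => βstar (π.symm k))
  have hgβ : ∀ k, g (β k) = βstar (π.symm k) := fun k => hgC k (β k) rfl
  -- the good set
  set D : Set (Fin n → ℝ) := ⋃ k, C k with hDdef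
  have hDmeas : MeasurableSet D :=
    (isClosed_iUnion_of_finite fun k => (hCcomp k).isClosed).measurableSet
  have hgood : ∀ x ∈ D, α (f x) = π (αstar x) ∧ g (β (α (f x))) = βstar (αstar x) := by
    intro x hx
    obtain ⟨k, hk⟩ := Set.mem_iUnion.1 hx
    have hxk : αstar x = k := hCα k x hk
    have hfx : f x = y (π k) := hfC k x hk
    have hαf : α (f x) = π (αstar x) := by rw [hfx, hyα, hxk]
    refine ⟨hαf, ?_⟩
    rw [hαf, hxk, hgβ, Equiv.symm_apply_apply]
  -- measure of the bad set
  have hPG : P (X ⁻¹' Dᶜ) ≤ ENNReal.ofReal η := by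
    have h1 : P (X ⁻¹' Dᶜ) = μ Dᶜ := (Measure.map_apply hX hDmeas.compl).symm
    have h2 : Dᶜ ⊆ ⋃ k, ({x | αstar x = k} \ C k) := by
      intro x hx
      refine Set.mem_iUnion.2 ⟨αstar x, rfl, fun hxC => hx (Set.mem_iUnion.2 ⟨αstar x, hxC⟩)⟩
    have h3 : μ Dᶜ ≤ ∑ k : K, μ ({x | αstar x = k} \ C k) :=
      (measure_mono h2).trans (measure_iUnion_fintype_le _ _)
    have h4 : ∑ k : K, μ ({x | αstar x = k} \ C k) ≤ ∑ _k : K, c :=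
      Finset.sum_le_sum fun k _ => (hCμ k).le
    have h5 : ∑ _k : K, c = (Fintype.card K : ℝ≥0∞) * c := by
      simp [Finset.sum_const, nsmul_eq_mul]
    have h6 : (Fintype.card K : ℝ≥0∞) * c ≤ ENNReal.ofReal η := by
      rw [hcdef, ENNReal.mul_div_cancel (by simp) (natCast_ne_top _)]
    rw [h1]
    exact h3.trans (h4.trans (h5 ▸ h6))
  have hPGr : (P (X ⁻¹' Dᶜ)).toReal ≤ η := ENNReal.toReal_le_of_le_ofReal hη.le hPG
  -- measurable partition sets
  have hTmeas : ∀ k : K, MeasurableSet {ω | α (f (X ω)) = k} :=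
    fun k => hX (hfc.measurable (hα k))
  have hSmeas : ∀ k : K, MeasurableSet {ω | αstar (X ω) = k} :=
    fun k => hX (hαstar k)
  -- the distortion integrand and its properties
  set φ : Ω → ℝ := fun ω => d (X ω, g (β (α (f (X ω))))) with hφdef
  have hφrep : ∀ ω, φ ω = ∑ k : K,
      Set.indicator {ω' | α (f (X ω')) = k} (fun ω' => d (X ω', g (β k))) ω :=
    fun ω => (sum_indicator_eq_comp (fun ω' => α (f (X ω')))
      (fun k ω' => d (X ω', g (β k))) ω).symm
  have hφmeas : Measurable φ := by
    have : φ = fun ω => ∑ k : K,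
        Set.indicator {ω' | α (f (X ω')) = k} (fun ω' => d (X ω', g (β k))) ω :=
      funext hφrep
    rw [this]
    exact Finset.measurable_sum _ fun k _ =>
      ((hd.measurable.comp (hX.prodMk measurable_const)).indicator (hTmeas k))
  have hφboundae : ∀ᵐ ω ∂P, ‖φ ω‖ ≤ M := by
    filter_upwards [hXB] with ω hωB
    rw [Real.norm_of_nonneg (hd0 _)]
    show d (X ω, g (β (α (f (X ω))))) ≤ M
    rw [hgβ (α (f (X ω)))]
    exact hdBM _ hωB _
  have hφint : Integrable φ P :=
    Integrable.mono' (integrable_const M) hφmeas.aestronglyMeasurable hφboundae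
  set ψ : Ω → ℝ := fun ω => d (X ω, βstar (αstar (X ω))) with hψdef
  have hψmeas : Measurable ψ := by
    have : ψ = fun ω => ∑ k : K,
        Set.indicator {ω' | αstar (X ω') = k} (fun ω' => d (X ω', βstar k)) ω :=
      funext fun ω => (sum_indicator_eq_comp (fun ω' => αstar (X ω'))
        (fun k ω' => d (X ω', βstar k)) ω).symm
    rw [this]
    exact Finset.measurable_sum _ fun k _ =>
      ((hd.measurable.comp (hX.prodMk measurable_const)).indicator (hSmeas k))
  have hψint : Integrable ψ P := by
    refine Integrable.mono' (integrable_const M) hψmeas.aestronglyMeasurable ?_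
    filter_upwards [hXB] with ω hωB
    rw [Real.norm_of_nonneg (hd0 _)]
    exact hdBM _ hωB _
  set ind : Ω → ℝ := Set.indicator (X ⁻¹' Dᶜ) (fun _ => M) with hinddef
  have hindint : Integrable ind P := (integrable_const M).indicator (hX hDmeas.compl)
  -- distortion bound
  have hdist : (∫ ω, φ ω ∂P) ≤ (∫ ω, ψ ω ∂P) + ε := by
    have hle : ∀ᵐ ω ∂P, φ ω ≤ ψ ω + ind ω := by
      filter_upwards [hXB] with ω hωB
      by_cases hωD : X ω ∈ D
      · have h1 : φ ω = ψ ω := by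
          show d (X ω, g (β (α (f (X ω))))) = d (X ω, βstar (αstar (X ω)))
          rw [(hgood _ hωD).2]
        have h2 : 0 ≤ ind ω := Set.indicator_nonneg (fun _ _ => hM0) ω
        linarith
      · have h1 : φ ω ≤ M := by
          show d (X ω, g (β (α (f (X ω))))) ≤ M
          rw [hgβ (α (f (X ω)))]
          exact hdBM _ hωB _
        have h2 : ind ω = M := Set.indicator_of_mem (show ω ∈ X ⁻¹' Dᶜ from hωD) _
        have h3 : 0 ≤ ψ ω := hd0 _
        linarith
    have h4 : (∫ ω, φ ω ∂P) ≤ ∫ ω, (ψ ω + ind ω) ∂P :=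
      integral_mono_ae hφint (hψint.add hindint) hle
    have h5 : (∫ ω, (ψ ω + ind ω) ∂P) = (∫ ω, ψ ω ∂P) + ∫ ω, ind ω ∂P :=
      integral_add hψint hindint
    have h6 : (∫ ω, ind ω ∂P) = (P (X ⁻¹' Dᶜ)).toReal • M := by
      rw [hinddef]
      exact integral_indicator_const _ (hX hDmeas.compl)
    have h6' : (∫ ω, ind ω ∂P) = (P (X ⁻¹' Dᶜ)).toReal * M := by rw [h6, smul_eq_mul]
    have h7 : (P (X ⁻¹' Dᶜ)).toReal * M ≤ η * M :=
      mul_le_mul_of_nonneg_right hPGr hM0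
    have h8 : η * M ≤ ε := by
      have h9 : η * M ≤ η * (M + Lmax + 1) :=
        mul_le_mul_of_nonneg_left (by linarith) hη.le
      calc η * M ≤ η * (M + Lmax + 1) := h9
        _ = ε / (M + Lmax + 1) * (M + Lmax + 1) := by rw [hηdef]
        _ = ε := div_mul_cancel₀ ε hdenom.ne'
    rw [h5, h6'] at h4
    linarith
  -- rate bound
  set ρ : Ω → ℝ := fun ω => (L (α (f (X ω))) : ℝ) with hρdef
  have hρmeas : Measurable ρ := by
    have : ρ = fun ω => ∑ k : K,
        Set.indicator {ω' | α (f (X ω')) = k} (fun _ => (L k : ℝ)) ω :=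
      funext fun ω => (sum_indicator_eq_comp (fun ω' => α (f (X ω'))) (fun k _ => (L k : ℝ)) ω).symm
    rw [this]
    exact Finset.measurable_sum _ fun k _ => (measurable_const.indicator (hTmeas k))
  have hρint : Integrable ρ P := by
    refine Integrable.mono' (integrable_const Lmax) hρmeas.aestronglyMeasurable ?_
    filter_upwards with ω
    rw [Real.norm_of_nonneg (Nat.cast_nonneg _)]
    exact hLle _
  set σ : Ω → ℝ := fun ω => (L (π (αstar (X ω))) : ℝ) with hσdef
  have hσrep : σ = fun ω => ∑ k : K,
      Set.indicator {ω' | αstar (X ω') = k} (fun _ => (L (π k) : ℝ)) ω :=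
    funext fun ω =>
      (sum_indicator_eq_comp (fun ω' => αstar (X ω')) (fun k _ => (L (π k) : ℝ)) ω).symm
  have hσint : Integrable σ P := by
    rw [hσrep]
    exact integrable_finset_sum _ fun k _ => (integrable_const _).indicator (hSmeas k)
  have hσval : (∫ ω, σ ω ∂P) = ∑ k : K, p k * (L (π k) : ℝ) := by
    rw [hσrep, integral_finset_sum _ fun k _ => (integrable_const _).indicator (hSmeas k)]
    refine Finset.sum_congr rfl fun k _ => ?_
    rw [integral_indicator_const _ (hSmeas k), hp k, smul_eq_mul, measureReal_def]
  set ind2 : Ω → ℝ := Set.indicator (X ⁻¹' Dᶜ) (fun _ => Lmax) with hind2def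
  have hind2int : Integrable ind2 P := (integrable_const Lmax).indicator (hX hDmeas.compl)
  have hrate1 : (∫ ω, ρ ω ∂P) ≤ (∑ k : K, p k * (L (π k) : ℝ)) + ε := by
    have hle : ∀ ω, ρ ω ≤ σ ω + ind2 ω := by
      intro ω
      by_cases hωD : X ω ∈ D
      · have h1 : ρ ω = σ ω := by
          show ((L (α (f (X ω)))) : ℝ) = ((L (π (αstar (X ω)))) : ℝ)
          rw [(hgood _ hωD).1]
        have h2 : 0 ≤ ind2 ω := Set.indicator_nonneg (fun _ _ => hLmax0) ω
        linarith
      · have h1 : ρ ω ≤ Lmax := hLle _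
        have h2 : ind2 ω = Lmax := Set.indicator_of_mem (show ω ∈ X ⁻¹' Dᶜ from hωD) _
        have h3 : (0:ℝ) ≤ σ ω := Nat.cast_nonneg _
        linarith
    have h4 : (∫ ω, ρ ω ∂P) ≤ ∫ ω, (σ ω + ind2 ω) ∂P :=
      integral_mono_ae hρint (hσint.add hind2int) (Filter.Eventually.of_forall hle)
    have h5 : (∫ ω, (σ ω + ind2 ω) ∂P) = (∫ ω, σ ω ∂P) + ∫ ω, ind2 ω ∂P :=
      integral_add hσint hind2int
    have h6 : (∫ ω, ind2 ω ∂P) = (P (X ⁻¹' Dᶜ)).toReal • Lmax := by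
      rw [hind2def]
      exact integral_indicator_const _ (hX hDmeas.compl)
    have h6' : (∫ ω, ind2 ω ∂P) = (P (X ⁻¹' Dᶜ)).toReal * Lmax := by rw [h6, smul_eq_mul]
    have h7 : (P (X ⁻¹' Dᶜ)).toReal * Lmax ≤ η * Lmax :=
      mul_le_mul_of_nonneg_right hPGr hLmax0
    have h8 : η * Lmax ≤ ε := by
      calc η * Lmax ≤ η * (M + Lmax + 1) :=
            mul_le_mul_of_nonneg_left (by linarith) hη.le
        _ = ε / (M + Lmax + 1) * (M + Lmax + 1) := by rw [hηdef]
        _ = ε := div_mul_cancel₀ ε hdenom.ne'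
    rw [h5, h6', hσval] at h4
    linarith
  -- the entropy identity
  have hident : (-∑ k : K, p k * Real.logb 2 (p k))
      + (∑ k : K, p k * Real.logb 2 (p k / q k)) = ∑ k : K, p k * (L (π k) : ℝ) := by
    rw [neg_add_eq_sub, ← Finset.sum_sub_distrib]
    refine Finset.sum_congr rfl fun k _ => ?_
    have hpk0 : 0 ≤ p k := by rw [hp k]; exact ENNReal.toReal_nonneg
    rcases eq_or_lt_of_le hpk0 with h | h
    · rw [← h]; ring
    · have hqk : q k = (2:ℝ) ^ (-(L (π k) : ℝ)) := hq k
      have hqpos : 0 < q k := by rw [hqk]; positivity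
      have hlogq : Real.logb 2 (q k) = -(L (π k) : ℝ) := by
        rw [hqk]
        exact Real.logb_rpow (by norm_num) (by norm_num)
      rw [Real.logb_div (ne_of_gt h) (ne_of_gt hqpos), hlogq]
      ring
  refine ⟨f, g, hfc, hgc, ?_, ?_⟩
  · exact hdist
  · rw [hident]
    exact hrate1
end

section
/- Monotone nonincrease of the Lagrangian in one iteration of the Codelength Constrained Vector Quantization algorithm. Let K be a finite nonempty type, let X be a random vector in ℝⁿ, let d : ℝⁿ × ℝⁿ → [0,∞) be measurable in its first argument for each fixed second argument, and let λ ≥ 0. Let (α₀, β₀, L₀) be the current measurable encoder, decoder, and codelength function. Suppose: (i) the measurable encoder α₁ : ℝⁿ → K is pointwise Lagrangian-optimal for (β₀, L₀), i.e., for every x and k, d(x, β₀(α₁(x))) + λ·L₀(α₁(x)) ≤ d(x, β₀(k)) + λ·L₀(k); (ii) the permutation π : K ≃ K is such that L₁ := L₀ ∘ π assigns codelengths in the same order as −log₂ p₁, i.e., p₁(k₁) > p₁(k₂) implies L₁(k₁) ≤ L₁(k₂), where p₁(k) := P(α₁(X) = k); and (iii) the decoder β₁ : K → ℝⁿ satisfies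 the centroid condition for α₁, i.e., for every k and every x̂ ∈ ℝⁿ, E[d(X, β₁(k)) · 1{α₁(X) = k}] ≤ E[d(X, x̂) · 1{α₁(X) = k}]. Then the Lagrangian does not increase: E[d(X, β₁(α₁(X)))] + λ·E[L₁(α₁(X))] ≤ E[d(X, β₀(α₀(X)))] + λ·E[L₀(α₀(X))]. -/
open MeasureTheory ENNReal

section Aux

variable {Ω : Type*} [MeasurableSpace Ω] {K : Type*} [Fintype K]

private lemma comp_meas_aux {n : ℕ} (X : Ω → (Fin n → ℝ)) (hX : Measurable X)
    (α : (Fin n → ℝ) → K) (hα : ∀ k : K, MeasurableSet {x : Fin n → ℝ | α x = k})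
    (g : K → Ω → ℝ≥0∞) (hg : ∀ k, Measurable (g k)) :
    Measurable (fun ω => g (α (X ω)) ω) := by
  have heq : (fun ω => g (α (X ω)) ω)
      = fun ω => ∑ k : K, Set.indicator {ω | α (X ω) = k} (g k) ω := by
    funext ω
    rw [Finset.sum_eq_single (α (X ω))]
    · simp [Set.indicator_of_mem, Set.mem_setOf_eq]
    · intro b _ hb
      apply Set.indicator_of_notMem
      simp only [Set.mem_setOf_eq]
      exact fun h => hb (h ▸ rfl)
    · simp
  rw [heq]
  apply Finset.measurable_sum
  intro k _
  exact (hg k).indicator (hX (hα k))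

private lemma lintegral_decomp_aux {n : ℕ} (P : Measure Ω) (X : Ω → (Fin n → ℝ))
    (hX : Measurable X)
    (α : (Fin n → ℝ) → K) (hα : ∀ k : K, MeasurableSet {x : Fin n → ℝ | α x = k})
    (f : Ω → ℝ≥0∞) :
    ∫⁻ ω, f ω ∂P = ∑ k : K, ∫⁻ ω in {ω | α (X ω) = k}, f ω ∂P := by
  have hunion : (⋃ k : K, {ω | α (X ω) = k}) = Set.univ := by
    ext ω; simp
  have hmeas : ∀ k : K, MeasurableSet {ω | α (X ω) = k} := fun k => hX (hα k)
  have hdisj : Pairwise (Function.onFun Disjoint (fun k : K => {ω | α (X ω) = k})) := by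
    intro i j hij
    simp only [Function.onFun, Set.disjoint_left, Set.mem_setOf_eq]
    intro ω h1 h2
    exact hij (h1 ▸ h2 ▸ rfl)
  calc ∫⁻ ω, f ω ∂P = ∫⁻ ω in Set.univ, f ω ∂P := (setLIntegral_univ f).symm
    _ = ∫⁻ ω in ⋃ k : K, {ω | α (X ω) = k}, f ω ∂P := by rw [hunion]
    _ = ∑' k : K, ∫⁻ ω in {ω | α (X ω) = k}, f ω ∂P := lintegral_iUnion hmeas hdisj f
    _ = ∑ k : K, ∫⁻ ω in {ω | α (X ω) = k}, f ω ∂P := tsum_fintype _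

end Aux

/-- **Monotone nonincrease of the Lagrangian in one iteration of the Codelength
Constrained Vector Quantization algorithm.**  Starting from `(α₀, β₀, L₀)`, suppose
(i) the encoder `α₁` is pointwise Lagrangian-optimal for `(β₀, L₀)`;
(ii) the permutation `π` is such that `L₁ = L₀ ∘ π` assigns codelengths in the same
order as `-log₂ p₁`, where `p₁ k = P(α₁ (X) = k)`; and
(iii) the decoder `β₁` satisfies the centroid condition for `α₁`.
Then the Lagrangian does not increase:
`E[d(X, β₁(α₁(X)))] + λ·E[L₁(α₁(X))] ≤ E[d(X, β₀(α₀(X)))] + λ·E[L₀(α₀(X))]`. -/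
theorem ccvq_iteration_nonincreasing {n : ℕ} {K : Type*} [Fintype K] [Nonempty K]
    {Ω : Type*} [MeasurableSpace Ω] (P : Measure Ω) [IsProbabilityMeasure P]
    (X : Ω → (Fin n → ℝ)) (hX : Measurable X)
    (d : (Fin n → ℝ) × (Fin n → ℝ) → NNReal)
    (hd : ∀ xhat : Fin n → ℝ, Measurable fun x : Fin n → ℝ => d (x, xhat))
    (lam : NNReal)
    (α₀ : (Fin n → ℝ) → K)
    (hα₀meas : ∀ k : K, MeasurableSet {x : Fin n → ℝ | α₀ x = k})
    (β₀ : K → (Fin n → ℝ)) (L₀ : K → ℕ)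
    (α₁ : (Fin n → ℝ) → K)
    (hα₁meas : ∀ k : K, MeasurableSet {x : Fin n → ℝ | α₁ x = k})
    (hopt : ∀ (x : Fin n → ℝ) (k : K),
      (d (x, β₀ (α₁ x)) : ℝ≥0∞) + (lam : ℝ≥0∞) * (L₀ (α₁ x) : ℝ≥0∞)
        ≤ (d (x, β₀ k) : ℝ≥0∞) + (lam : ℝ≥0∞) * (L₀ k : ℝ≥0∞))
    (π : Equiv.Perm K) (L₁ : K → ℕ) (hL₁ : ∀ k, L₁ k = L₀ (π k))
    (p₁ : K → ℝ) (hp₁ : ∀ k, p₁ k = (P {ω | α₁ (X ω) = k}).toReal)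
    (hsort : ∀ k₁ k₂ : K, p₁ k₁ > p₁ k₂ → L₁ k₁ ≤ L₁ k₂)
    (β₁ : K → (Fin n → ℝ))
    (hcentroid : ∀ (k : K) (xhat : Fin n → ℝ),
      ∫⁻ ω in {ω | α₁ (X ω) = k}, (d (X ω, β₁ k) : ℝ≥0∞) ∂P
        ≤ ∫⁻ ω in {ω | α₁ (X ω) = k}, (d (X ω, xhat) : ℝ≥0∞) ∂P) :
    (∫⁻ ω, (d (X ω, β₁ (α₁ (X ω))) : ℝ≥0∞) ∂P)
        + (lam : ℝ≥0∞) * ∫⁻ ω, (L₁ (α₁ (X ω)) : ℝ≥0∞) ∂P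
      ≤ (∫⁻ ω, (d (X ω, β₀ (α₀ (X ω))) : ℝ≥0∞) ∂P)
        + (lam : ℝ≥0∞) * ∫⁻ ω, (L₀ (α₀ (X ω)) : ℝ≥0∞) ∂P := by
  have hAmeas : ∀ k : K, MeasurableSet {ω | α₁ (X ω) = k} := fun k => hX (hα₁meas k)
  -- set integral congruence on pieces
  have hpiece : ∀ (β : K → (Fin n → ℝ)) (k : K),
      ∫⁻ ω in {ω | α₁ (X ω) = k}, (d (X ω, β (α₁ (X ω))) : ℝ≥0∞) ∂P
        = ∫⁻ ω in {ω | α₁ (X ω) = k}, (d (X ω, β k) : ℝ≥0∞) ∂P := by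
    intro β k
    apply setLIntegral_congr_fun (hAmeas k)
    intro ω hω
    beta_reduce
    rw [show α₁ (X ω) = k from hω]
  -- Step 1: centroid condition
  have step1 : (∫⁻ ω, (d (X ω, β₁ (α₁ (X ω))) : ℝ≥0∞) ∂P)
      ≤ ∫⁻ ω, (d (X ω, β₀ (α₁ (X ω))) : ℝ≥0∞) ∂P := by
    rw [lintegral_decomp_aux P X hX α₁ hα₁meas,
        lintegral_decomp_aux P X hX α₁ hα₁meas]
    apply Finset.sum_le_sum
    intro k _
    rw [hpiece β₁ k, hpiece β₀ k]
    exact hcentroid k (β₀ k)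
  -- Expression of codelength integrals as sums
  have hLsum : ∀ L : K → ℕ,
      (∫⁻ ω, (L (α₁ (X ω)) : ℝ≥0∞) ∂P)
        = ∑ k : K, (L k : ℝ≥0∞) * P {ω | α₁ (X ω) = k} := by
    intro L
    rw [lintegral_decomp_aux P X hX α₁ hα₁meas]
    apply Finset.sum_congr rfl
    intro k _
    have : ∫⁻ ω in {ω | α₁ (X ω) = k}, (L (α₁ (X ω)) : ℝ≥0∞) ∂P
        = ∫⁻ _ in {ω | α₁ (X ω) = k}, (L k : ℝ≥0∞) ∂P := by
      apply setLIntegral_congr_fun (hAmeas k)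
      intro ω hω
      beta_reduce
      rw [show α₁ (X ω) = k from hω]
    rw [this, setLIntegral_const]
  -- Step 2: rearrangement
  have step2 : (∫⁻ ω, (L₁ (α₁ (X ω)) : ℝ≥0∞) ∂P)
      ≤ ∫⁻ ω, (L₀ (α₁ (X ω)) : ℝ≥0∞) ∂P := by
    rw [hLsum L₁, hLsum L₀]
    have hfin : ∀ (L : K → ℕ) (k : K), (L k : ℝ≥0∞) * P {ω | α₁ (X ω) = k} ≠ ⊤ :=
      fun L k => ENNReal.mul_ne_top (by simp) (measure_ne_top P _)
    have hsumfin : ∀ L : K → ℕ,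
        (∑ k : K, (L k : ℝ≥0∞) * P {ω | α₁ (X ω) = k}) ≠ ⊤ := by
      intro L
      exact (ENNReal.sum_lt_top.mpr fun k _ => lt_top_iff_ne_top.mpr (hfin L k)).ne
    rw [← ENNReal.toReal_le_toReal (hsumfin L₁) (hsumfin L₀),
        ENNReal.toReal_sum (fun k _ => hfin L₁ k), ENNReal.toReal_sum (fun k _ => hfin L₀ k)]
    simp only [ENNReal.toReal_mul, ENNReal.toReal_natCast]
    have hAv : Antivary p₁ (fun k => (L₁ k : ℝ)) := by
      intro i j hij
      by_contra h
      push_neg at h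
      have := hsort j i h
      exact absurd hij (not_lt.mpr (Nat.cast_le.mpr this))
    have key := hAv.sum_mul_le_sum_mul_comp_perm (σ := π⁻¹)
    have hL₀eq : ∀ k : K, (L₁ (π⁻¹ k) : ℝ) = (L₀ k : ℝ) := by
      intro k
      rw [hL₁ (π⁻¹ k)]
      simp
    calc ∑ k : K, (L₁ k : ℝ) * (P {ω | α₁ (X ω) = k}).toReal
        = ∑ k : K, p₁ k * (L₁ k : ℝ) := by
          apply Finset.sum_congr rfl; intro k _; rw [hp₁ k, mul_comm]
      _ ≤ ∑ k : K, p₁ k * (L₁ (π⁻¹ k) : ℝ) := key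
      _ = ∑ k : K, (L₀ k : ℝ) * (P {ω | α₁ (X ω) = k}).toReal := by
          apply Finset.sum_congr rfl; intro k _
          rw [show p₁ k * ((fun k => (L₁ k : ℝ)) (π⁻¹ k)) = p₁ k * (L₁ (π⁻¹ k) : ℝ) from rfl,
            hL₀eq k, hp₁ k, mul_comm]
  -- measurability facts
  have hdmeas : ∀ (α : (Fin n → ℝ) → K) (_ : ∀ k, MeasurableSet {x | α x = k})
      (β : K → (Fin n → ℝ)),
      Measurable (fun ω => (d (X ω, β (α (X ω))) : ℝ≥0∞)) := by
    intro α hα β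
    exact comp_meas_aux X hX α hα (fun k ω => (d (X ω, β k) : ℝ≥0∞))
      (fun k => ((hd (β k)).comp hX).coe_nnreal_ennreal)
  have hLmeas : ∀ (α : (Fin n → ℝ) → K) (_ : ∀ k, MeasurableSet {x | α x = k})
      (L : K → ℕ),
      Measurable (fun ω => (lam : ℝ≥0∞) * (L (α (X ω)) : ℝ≥0∞)) := by
    intro α hα L
    exact comp_meas_aux X hX α hα (fun k _ => (lam : ℝ≥0∞) * (L k : ℝ≥0∞))
      (fun k => measurable_const)
  -- Step 3: encoder optimality
  have step3 : (∫⁻ ω, (d (X ω, β₀ (α₁ (X ω))) : ℝ≥0∞) ∂P)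
        + (lam : ℝ≥0∞) * ∫⁻ ω, (L₀ (α₁ (X ω)) : ℝ≥0∞) ∂P
      ≤ (∫⁻ ω, (d (X ω, β₀ (α₀ (X ω))) : ℝ≥0∞) ∂P)
        + (lam : ℝ≥0∞) * ∫⁻ ω, (L₀ (α₀ (X ω)) : ℝ≥0∞) ∂P := by
    rw [← lintegral_const_mul' _ _ coe_ne_top, ← lintegral_const_mul' _ _ coe_ne_top,
        ← lintegral_add_left (hdmeas α₁ hα₁meas β₀), ← lintegral_add_left (hdmeas α₀ hα₀meas β₀)]
    apply lintegral_mono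
    intro ω
    exact hopt (X ω) (α₀ (X ω))
  calc (∫⁻ ω, (d (X ω, β₁ (α₁ (X ω))) : ℝ≥0∞) ∂P)
        + (lam : ℝ≥0∞) * ∫⁻ ω, (L₁ (α₁ (X ω)) : ℝ≥0∞) ∂P
      ≤ (∫⁻ ω, (d (X ω, β₀ (α₁ (X ω))) : ℝ≥0∞) ∂P)
        + (lam : ℝ≥0∞) * ∫⁻ ω, (L₀ (α₁ (X ω)) : ℝ≥0∞) ∂P :=
        add_le_add step1 (mul_le_mul_right step2 _)
    _ ≤ _ := step3
end
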